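/- Let k, ℓ > 0 with ℓ > 2k. Define T_k(r) = max{min{r, k}, −k}, T̄_k(r) = ∫₀^r T_k(τ) dτ, J(r) = T_{ℓ−k}(r − T_k(r)) and J̄(r) = ∫₀^r J(τ) dτ. Then for all r, s ∈ ℝ with |s| ≤ k, one has T̄_{ℓ+k}(r − s) − J̄(r) ≥ 0. -/

import Mathlib

open MeasureTheory

/-- The truncation at level `k`: `T_k(r) = max (min r k) (-k)`. -/
noncomputable def Tk (k r : ℝ) : ℝ := max (min r k) (-k)

/-- The primitive `T̄_k(r) = ∫₀^r T_k(τ) dτ`. -/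
noncomputable def Tkbar (k r : ℝ) : ℝ := ∫ τ in (0:ℝ)..r, Tk k τ

/-- `J(r) = T_{ℓ-k}(r - T_k(r))`. -/
noncomputable def Jfun (k ℓ r : ℝ) : ℝ := Tk (ℓ - k) (r - Tk k r)

/-- `J̄(r) = ∫₀^r J(τ) dτ`. -/
noncomputable def Jbar (k ℓ r : ℝ) : ℝ := ∫ τ in (0:ℝ)..r, Jfun k ℓ τ

lemma Tk_cont (m : ℝ) : Continuous (Tk m) :=
  (continuous_id.min continuous_const).max continuous_const

lemma hasDerivAt_maxsq (x : ℝ) :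
    HasDerivAt (fun t : ℝ => (max t 0) ^ 2) (2 * max x 0) x := by
  rcases lt_trichotomy x 0 with h | h | h
  · have he : (fun t : ℝ => (max t 0) ^ 2) =ᶠ[nhds x] fun _ => (0 : ℝ) := by
      filter_upwards [Iio_mem_nhds h] with t ht
      simp [max_eq_right (Set.mem_Iio.mp ht).le]
    have := (hasDerivAt_const x (0 : ℝ)).congr_of_eventuallyEq he
    simpa [max_eq_right h.le] using this
  · subst h
    rw [hasDerivAt_iff_isLittleO, Asymptotics.isLittleO_iff]
    intro c hc
    filter_upwards [Metric.ball_mem_nhds (0 : ℝ) hc] with t ht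
    rw [Metric.mem_ball, Real.dist_eq, sub_zero] at ht
    have h2 : |max t 0 ^ 2| ≤ |t| * |t| := by
      rcases le_total t 0 with h' | h'
      · rw [max_eq_right h']
        simpa using mul_nonneg (abs_nonneg t) (abs_nonneg t)
      · rw [max_eq_left h', abs_of_nonneg (sq_nonneg t), sq, ← abs_mul_abs_self]
    have key : |max t 0 ^ 2| ≤ c * |t| :=
      le_trans h2 (mul_le_mul_of_nonneg_right ht.le (abs_nonneg t))
    simpa using key
  · have he : (fun t : ℝ => (max t 0) ^ 2) =ᶠ[nhds x] fun t => t ^ 2 := by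
      filter_upwards [Ioi_mem_nhds h] with t ht
      simp [max_eq_left (Set.mem_Ioi.mp ht).le]
    have := (hasDerivAt_pow 2 x).congr_of_eventuallyEq he
    simpa [max_eq_left h.le, mul_comm] using this

lemma min_zero_eq (t : ℝ) : min t 0 = -max (-t) 0 := by
  rcases le_total t 0 with h | h
  · simp [min_eq_left h, max_eq_left (by linarith : (0:ℝ) ≤ -t)]
  · simp [min_eq_right h, max_eq_right (by linarith : -t ≤ (0:ℝ))]

lemma hasDerivAt_minsq (x : ℝ) :
    HasDerivAt (fun t : ℝ => (min t 0) ^ 2) (2 * min x 0) x := by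
  have h := (hasDerivAt_maxsq (-x)).comp x (hasDerivAt_neg x)
  simp only [Function.comp_def] at h
  have he : ∀ t : ℝ, (max (-t) 0) ^ 2 = (min t 0) ^ 2 := by
    intro t
    rw [min_zero_eq]
    ring
  simp only [he] at h
  refine h.congr_deriv ?_
  rw [min_zero_eq]
  ring

lemma sub_Tk_eq (m x : ℝ) (hm : 0 < m) :
    x - Tk m x = max (x - m) 0 + min (x + m) 0 := by
  unfold Tk
  rw [max_def, min_def, max_def, min_def]
  split_ifs <;> linarith

lemma cross_zero (m x : ℝ) (hm : 0 < m) : max (x - m) 0 * min (x + m) 0 = 0 := by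
  rcases le_total (x - m) 0 with h | h
  · rw [max_eq_right h, zero_mul]
  · rw [min_eq_right (by linarith : (0:ℝ) ≤ x + m), mul_zero]

lemma hasDerivAt_sq_sub (m : ℝ) (hm : 0 < m) (x : ℝ) :
    HasDerivAt (fun x => (x - Tk m x) ^ 2) (2 * (x - Tk m x)) x := by
  have he : (fun x => (x - Tk m x) ^ 2)
      = fun x => (max (x - m) 0) ^ 2 + (min (x + m) 0) ^ 2 := by
    funext t
    rw [sub_Tk_eq m t hm]
    have := cross_zero m t hm
    ring_nf
    nlinarith [cross_zero m t hm]
  rw [he]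
  have h1 : HasDerivAt (fun x : ℝ => (max (x - m) 0) ^ 2) (2 * max (x - m) 0) x := by
    have := (hasDerivAt_maxsq (x - m)).comp x ((hasDerivAt_id x).sub_const m)
    exact this.congr_deriv (mul_one _)
  have h2 : HasDerivAt (fun x : ℝ => (min (x + m) 0) ^ 2) (2 * min (x + m) 0) x := by
    have := (hasDerivAt_minsq (x + m)).comp x ((hasDerivAt_id x).add_const m)
    exact this.congr_deriv (mul_one _)
  have := h1.add h2
  refine this.congr_deriv ?_
  rw [sub_Tk_eq m x hm]
  ring

lemma hasDerivAt_F (m : ℝ) (hm : 0 < m) (x : ℝ) :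
    HasDerivAt (fun x => (x ^ 2 - (x - Tk m x) ^ 2) / 2) (Tk m x) x := by
  have := ((hasDerivAt_pow 2 x).sub (hasDerivAt_sq_sub m hm x)).div_const 2
  refine this.congr_deriv ?_
  ring

lemma Tk_zero (m : ℝ) (hm : 0 < m) : Tk m 0 = 0 := by
  unfold Tk
  rw [min_eq_left hm.le, max_eq_left (by linarith)]

lemma Tkbar_eq (m : ℝ) (hm : 0 < m) (x : ℝ) :
    Tkbar m x = (x ^ 2 - (x - Tk m x) ^ 2) / 2 := by
  unfold Tkbar
  rw [intervalIntegral.integral_eq_sub_of_hasDerivAt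
    (fun t _ => hasDerivAt_F m hm t) ((Tk_cont m).intervalIntegrable 0 x)]
  rw [Tk_zero m hm]
  ring

lemma J_eq (k ℓ : ℝ) (hk : 0 < k) (hℓ : 2 * k < ℓ) (τ : ℝ) :
    Jfun k ℓ τ = Tk ℓ τ - Tk k τ := by
  simp only [Jfun, Tk, max_def, min_def]
  split_ifs <;> linarith

lemma Jbar_eq (k ℓ : ℝ) (hk : 0 < k) (hℓ : 2 * k < ℓ) (r : ℝ) :
    Jbar k ℓ r = Tkbar ℓ r - Tkbar k r := by
  unfold Jbar Tkbar
  rw [← intervalIntegral.integral_sub ((Tk_cont ℓ).intervalIntegrable 0 r)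
    ((Tk_cont k).intervalIntegrable 0 r)]
  exact intervalIntegral.integral_congr fun τ _ => J_eq k ℓ hk hℓ τ

noncomputable def fF (m x : ℝ) : ℝ := if |x| ≤ m then x ^ 2 / 2 else m * |x| - m ^ 2 / 2

lemma Tkbar_f (m : ℝ) (hm : 0 < m) (x : ℝ) : Tkbar m x = fF m x := by
  rw [Tkbar_eq m hm, fF]
  split_ifs with h
  · rw [abs_le] at h
    have : Tk m x = x := by
      unfold Tk
      rw [min_eq_left h.2, max_eq_left h.1]
    rw [this]
    ring
  · push_neg at h
    rcases le_or_gt x 0 with hx | hx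
    · rw [abs_of_nonpos hx] at h ⊢
      have : Tk m x = -m := by
        unfold Tk
        rw [min_eq_left (by linarith), max_eq_right (by linarith)]
      rw [this]
      ring
    · rw [abs_of_pos hx] at h ⊢
      have : Tk m x = m := by
        unfold Tk
        rw [min_eq_right (by linarith), max_eq_left (by linarith)]
      rw [this]
      ring

lemma fF_le (m x : ℝ) (h : |x| ≤ m) : fF m x = x ^ 2 / 2 := by
  unfold fF
  rw [if_pos h]

lemma fF_gt (m x : ℝ) (h : ¬ |x| ≤ m) : fF m x = m * |x| - m ^ 2 / 2 := by
  unfold fF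
  rw [if_neg h]

lemma fF_nonneg (m x : ℝ) (hm : 0 < m) : 0 ≤ fF m x := by
  unfold fF
  split_ifs with h
  · positivity
  · push_neg at h
    nlinarith [abs_nonneg x]

lemma key (k ℓ r s : ℝ) (hk : 0 < k) (hℓ : 2 * k < ℓ) (hab : |r| - k ≤ |r - s|) :
    fF ℓ r - fF k r ≤ fF (ℓ + k) (r - s) := by
  have ha : 0 ≤ |r| := abs_nonneg r
  have hb : 0 ≤ |r - s| := abs_nonneg _
  have hra : r ^ 2 = |r| ^ 2 := (sq_abs r).symm
  have hrb : (r - s) ^ 2 = |r - s| ^ 2 := (sq_abs (r - s)).symm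
  set a := |r| with hadef
  set b := |r - s| with hbdef
  rcases le_or_gt a k with h2 | h2
  · rw [fF_le k r h2, fF_le ℓ r (le_trans h2 (by linarith))]
    have := fF_nonneg (ℓ + k) (r - s) (by linarith)
    linarith
  · rw [fF_gt k r (not_le.mpr h2)]
    have hak : 0 ≤ a - k := by linarith
    rcases le_or_gt a ℓ with h1 | h1 <;> rcases le_or_gt b (ℓ + k) with h3 | h3
    · rw [fF_le ℓ r h1, fF_le (ℓ + k) (r - s) h3, hra, hrb]
      nlinarith [mul_nonneg (by linarith : (0:ℝ) ≤ b - a + k) (by linarith : (0:ℝ) ≤ b + a - k)]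
    · rw [fF_le ℓ r h1, fF_gt (ℓ + k) (r - s) (not_le.mpr h3), hra]
      nlinarith [mul_nonneg (by linarith : (0:ℝ) ≤ b - ℓ - k) (by linarith : (0:ℝ) ≤ ℓ + k),
        sq_nonneg (ℓ + 2 * k - a)]
    · rw [fF_gt ℓ r (not_le.mpr h1), fF_le (ℓ + k) (r - s) h3, hrb]
      nlinarith [mul_nonneg (by linarith : (0:ℝ) ≤ b - a + k) (by linarith : (0:ℝ) ≤ b + a - k),
        sq_nonneg (a - ℓ)]
    · rw [fF_gt ℓ r (not_le.mpr h1), fF_gt (ℓ + k) (r - s) (not_le.mpr h3)]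
      nlinarith [mul_nonneg (by linarith : (0:ℝ) ≤ ℓ - k) (by linarith : (0:ℝ) ≤ b - a + k),
        mul_nonneg hk.le (by linarith : (0:ℝ) ≤ b - ℓ - k)]

/-- For `0 < 2k < ℓ` and all `r, s ∈ ℝ` with `|s| ≤ k`:
`T̄_{ℓ+k}(r - s) - J̄(r) ≥ 0`. -/
theorem stmt9 (k ℓ : ℝ) (hk : 0 < k) (hℓ : 2 * k < ℓ) (r s : ℝ) (hs : |s| ≤ k) :
    0 ≤ Tkbar (ℓ + k) (r - s) - Jbar k ℓ r := by
  have hkℓ : 0 < ℓ := by linarith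
  have hab : |r| - k ≤ |r - s| := by
    have := abs_sub_abs_le_abs_sub r s
    linarith
  rw [Jbar_eq k ℓ hk hℓ, Tkbar_f (ℓ + k) (by linarith), Tkbar_f ℓ hkℓ, Tkbar_f k hk]
  have := key k ℓ r s hk hℓ hab
  linarith
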